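/- Let G be a finite simple graph and let k, ℓ be natural numbers. Suppose x : V(G) → ℝ is a fractional vertex cover of G (i.e., 0 ≤ x_v ≤ 1 for all vertices v, and x_u + x_v ≥ 1 for every edge uv) whose total value Σ_v x_v is minimum among all fractional vertex covers of G. If Σ_v x_v > k + ℓ, then there is no vertex set S with |S| ≤ k such that G − S has at most ℓ edges. -/

import Mathlib

/-- The graph obtained from `G` by deleting the vertices in `S`. -/
def SimpleGraph.delVerts {V : Type*} (G : SimpleGraph V) (S : Set V) : SimpleGraph V where
  Adj a b := G.Adj a b ∧ a ∉ S ∧ b ∉ S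
  symm := ⟨fun _ _ h => ⟨h.1.symm, h.2.2, h.2.1⟩⟩
  loopless := ⟨fun a h => G.loopless.irrefl a h.1⟩

/-- If `x` is a minimum fractional vertex cover of `G` of total value greater than `k + ℓ`,
then there is no vertex set `S` with `|S| ≤ k` such that `G - S` has at most `ℓ` edges. -/
theorem no_solution_of_fractionalVertexCover_gt {V : Type*} [Fintype V] [DecidableEq V]
    (G : SimpleGraph V) (k ℓ : ℕ) (x : V → ℝ)
    (hx0 : ∀ v, 0 ≤ x v) (hx1 : ∀ v, x v ≤ 1)
    (hxcov : ∀ ⦃u v : V⦄, G.Adj u v → 1 ≤ x u + x v)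
    (hmin : ∀ y : V → ℝ, (∀ v, 0 ≤ y v) → (∀ v, y v ≤ 1) →
      (∀ ⦃u v : V⦄, G.Adj u v → 1 ≤ y u + y v) → ∑ v, x v ≤ ∑ v, y v)
    (hgt : (k : ℝ) + ℓ < ∑ v, x v) :
    ¬ ∃ S : Finset V, S.card ≤ k ∧ (G.delVerts ↑S).edgeSet.ncard ≤ ℓ := by
  classical
  rintro ⟨S, hSk, hE⟩
  set E := (G.delVerts ↑S).edgeSet with hEdef
  have hEfin : E.Finite := Set.toFinite _
  set T : Finset V := hEfin.toFinset.image (fun e => (Quot.out e).1) with hTdef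
  have hTcard : T.card ≤ ℓ := by
    calc T.card ≤ hEfin.toFinset.card := Finset.card_image_le
    _ = E.ncard := (Set.ncard_eq_toFinset_card E hEfin).symm
    _ ≤ ℓ := hE
  set y : V → ℝ := fun v => if v ∈ S ∪ T then 1 else 0 with hydef
  have hy0 : ∀ v, 0 ≤ y v := fun v => by simp only [hydef]; split <;> norm_num
  have hy1 : ∀ v, y v ≤ 1 := fun v => by simp only [hydef]; split <;> norm_num
  have hycov : ∀ ⦃u v : V⦄, G.Adj u v → 1 ≤ y u + y v := by
    intro u v huv
    by_cases hu : u ∈ S ∪ T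
    · have : 1 ≤ y u := by
        show (1:ℝ) ≤ if u ∈ S ∪ T then 1 else 0
        rw [if_pos hu]
      linarith [hy0 v]
    · have huS : u ∉ S := fun h => hu (Finset.mem_union_left _ h)
      by_cases hv : v ∈ S
      · have : 1 ≤ y v := by
          show (1:ℝ) ≤ if v ∈ S ∪ T then 1 else 0
          rw [if_pos (Finset.mem_union_left _ hv)]
        linarith [hy0 u]
      · have he : s(u, v) ∈ E := by
          rw [hEdef, SimpleGraph.mem_edgeSet]
          exact ⟨huv, huS, hv⟩
        have hmem : (Quot.out s(u, v)).1 ∈ s(u, v) := Sym2.out_fst_mem _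
        have hmemT : (Quot.out s(u, v)).1 ∈ T := by
          rw [hTdef]
          exact Finset.mem_image.mpr ⟨s(u, v), hEfin.mem_toFinset.mpr he, rfl⟩
        rcases Sym2.mem_iff.mp hmem with h | h
        · exact absurd (Finset.mem_union_right _ (h ▸ hmemT)) hu
        · have : 1 ≤ y v := by
            show (1:ℝ) ≤ if v ∈ S ∪ T then 1 else 0
            rw [if_pos (Finset.mem_union_right _ (h ▸ hmemT))]
          linarith [hy0 u]
  have hsum : ∑ v, y v ≤ (k : ℝ) + ℓ := by
    have : ∑ v, y v = ((S ∪ T).card : ℝ) := by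
      rw [Finset.card_eq_sum_ones, Nat.cast_sum]
      rw [← Finset.sum_filter_add_sum_filter_not Finset.univ (· ∈ S ∪ T) y]
      have h1 : ∀ v ∈ Finset.univ.filter (· ∈ S ∪ T), y v = 1 := by
        intro v hv; simp only [Finset.mem_filter] at hv
        show (if v ∈ S ∪ T then (1:ℝ) else 0) = 1
        rw [if_pos hv.2]
      have h2 : ∀ v ∈ Finset.univ.filter (¬ · ∈ S ∪ T), y v = 0 := by
        intro v hv; simp only [Finset.mem_filter] at hv
        show (if v ∈ S ∪ T then (1:ℝ) else 0) = 0
        rw [if_neg hv.2]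
      rw [Finset.sum_congr rfl h1, Finset.sum_congr rfl h2]
      simp only [Finset.sum_const, nsmul_eq_mul, mul_one, Finset.sum_const_zero, add_zero]
      norm_cast
      rw [Nat.mul_zero, Nat.add_zero, Nat.mul_one]
      apply congrArg Finset.card
      ext v
      simp
    rw [this]
    have := (Finset.card_union_le S T).trans (Nat.add_le_add hSk hTcard)
    calc ((S ∪ T).card : ℝ) ≤ ((k + ℓ : ℕ) : ℝ) := by exact_mod_cast this
    _ = (k : ℝ) + ℓ := by push_cast; ring
  linarith [hmin y hy0 hy1 hycov]
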